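/- The unification of two unifiable, variable-disjoint g.v.d.'s that have no common ground member is again a g.v.d. (that is, there is an mgu θ such that the common instance is a g.v.d.). -/

import Mathlib

/-- Terms: variables, number constants, and list constructors. -/
inductive Tm : Type
  | var : ℕ → Tm
  | const : ℕ → Tm
  | nil : Tm
  | cons : Tm → Tm → Tm
deriving DecidableEq

/-- The set of variables of a term. -/
def Tm.vars : Tm → Finset ℕ
  | .var x => {x}
  | .const _ => ∅
  | .nil => ∅
  | .cons s t => s.vars ∪ t.vars

/-- A term is ground if it has no variables. -/
def Tm.Ground (t : Tm) : Prop := t.vars = ∅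

/-- Boolean groundness test. -/
def Tm.groundB : Tm → Bool
  | .var _ => false
  | .const _ => true
  | .nil => true
  | .cons s t => s.groundB && t.groundB

/-- Applying a substitution to a term. -/
def Tm.subst (σ : ℕ → Tm) : Tm → Tm
  | .var x => σ x
  | .const c => .const c
  | .nil => .nil
  | .cons s t => .cons (s.subst σ) (t.subst σ)

/-- The open list `[t₁,…,tₙ|v]` with members `ts` and open-list variable `v`. -/
def mkOpen (ts : List Tm) (v : ℕ) : Tm := ts.foldr .cons (.var v)

/-- The (closed) list `[t₁,…,tₙ]` with members `ts`. -/
def mkList (ts : List Tm) : Tm := ts.foldr .cons .nil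

/-- `(ts, v)` describes a g.v.d. (a linear open list with pairwise distinct
    members, each member ground or a variable). -/
def IsGVD (ts : List Tm) (v : ℕ) : Prop :=
  (∀ t ∈ ts, t.Ground ∨ ∃ x, t = .var x) ∧
  ts.Nodup ∧
  (ts.map Tm.vars).Pairwise Disjoint ∧
  ∀ t ∈ ts, v ∉ t.vars

/-- `θ` unifies `s` and `t`. -/
def IsUnifier (s t : Tm) (θ : ℕ → Tm) : Prop := s.subst θ = t.subst θ

/-- `θ` is a most general unifier of `s` and `t`. -/
def IsMGU (s t : Tm) (θ : ℕ → Tm) : Prop :=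
  IsUnifier s t θ ∧ ∀ σ, IsUnifier s t σ → ∃ δ, ∀ x, σ x = (θ x).subst δ

/-- `s` is the `k`-th member (1-based) of the term `t`,
    i.e. `t = [t₁,…,t_{k-1},s|t₀]`. -/
inductive KthMem : Tm → ℕ → Tm → Prop
  | head (s t : Tm) : KthMem (.cons s t) 1 s
  | tail {t : Tm} {k : ℕ} {s : Tm} (a : Tm) : KthMem t k s → KthMem (.cons a t) (k + 1) s

lemma ground_not_var {t : Tm} (h : t.Ground) (x : ℕ) : t ≠ .var x := by
  rintro rfl; simp [Tm.Ground, Tm.vars] at h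

lemma ground_subst {t : Tm} (h : t.Ground) (σ : ℕ → Tm) : t.subst σ = t := by
  induction t with
  | var x => exact absurd rfl (ground_not_var h x)
  | const c => rfl
  | nil => rfl
  | cons s t ihs iht =>
    simp only [Tm.Ground, Tm.vars, Finset.union_eq_empty] at h
    simp [Tm.subst, ihs h.1, iht h.2]

lemma subst_congr {t : Tm} {σ σ' : ℕ → Tm} (h : ∀ x ∈ t.vars, σ x = σ' x) :
    t.subst σ = t.subst σ' := by
  induction t with
  | var x => exact h x (by simp [Tm.vars])
  | const c => rfl
  | nil => rfl
  | cons s t ihs iht =>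
    simp only [Tm.vars, Finset.mem_union] at h
    simp [Tm.subst, ihs fun x hx => h x (Or.inl hx), iht fun x hx => h x (Or.inr hx)]

lemma subst_id {t : Tm} {σ : ℕ → Tm} (h : ∀ x ∈ t.vars, σ x = .var x) : t.subst σ = t := by
  induction t with
  | var x => exact h x (by simp [Tm.vars])
  | const c => rfl
  | nil => rfl
  | cons s t ihs iht =>
    simp only [Tm.vars, Finset.mem_union] at h
    simp [Tm.subst, ihs fun x hx => h x (Or.inl hx), iht fun x hx => h x (Or.inr hx)]

lemma mkOpen_cons (t : Tm) (ts : List Tm) (v : ℕ) :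
    mkOpen (t :: ts) v = .cons t (mkOpen ts v) := rfl

lemma mkOpen_subst (σ : ℕ → Tm) (ts : List Tm) (v : ℕ) :
    (mkOpen ts v).subst σ = (ts.map (Tm.subst σ)).foldr .cons (σ v) := by
  induction ts with
  | nil => rfl
  | cons t ts ih =>
    rw [mkOpen_cons]
    show Tm.cons (t.subst σ) ((mkOpen ts v).subst σ) = _
    rw [ih]; rfl

lemma foldr_mkOpen (a ts : List Tm) (v : ℕ) :
    a.foldr .cons (mkOpen ts v) = mkOpen (a ++ ts) v := by
  induction a with
  | nil => rfl
  | cons t a ih =>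
    rw [List.foldr_cons, ih]; rfl

lemma mem_mkOpen_vars {x : ℕ} {ts : List Tm} {v : ℕ} :
    x ∈ (mkOpen ts v).vars ↔ x = v ∨ ∃ t ∈ ts, x ∈ t.vars := by
  induction ts with
  | nil => simp [mkOpen, Tm.vars]
  | cons t ts ih =>
    rw [mkOpen_cons]
    show x ∈ t.vars ∪ (mkOpen ts v).vars ↔ _
    simp only [Finset.mem_union, ih, List.mem_cons]
    constructor
    · rintro (h | h | ⟨u, hu, hx⟩)
      · exact Or.inr ⟨t, Or.inl rfl, h⟩
      · exact Or.inl h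
      · exact Or.inr ⟨u, Or.inr hu, hx⟩
    · rintro (h | ⟨u, (rfl | hu), hx⟩)
      · exact Or.inr (Or.inl h)
      · exact Or.inl hx
      · exact Or.inr (Or.inr ⟨u, hu, hx⟩)

lemma unif_zip {ts us : List Tm} {v w : ℕ} {σ : ℕ → Tm}
    (h : IsUnifier (mkOpen ts v) (mkOpen us w) σ) :
    ∀ q ∈ ts.zip us, Tm.subst σ q.1 = Tm.subst σ q.2 := by
  induction ts generalizing us with
  | nil => simp
  | cons t ts ih =>
    cases us with
    | nil => simp
    | cons u us =>
      simp only [IsUnifier, mkOpen_cons, Tm.subst, Tm.cons.injEq] at h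
      rintro q hq
      rcases List.mem_cons.1 hq with rfl | hq
      · exact h.1
      · exact ih h.2 q hq

lemma unif_tail {ts us : List Tm} {v w : ℕ} {σ : ℕ → Tm}
    (h : IsUnifier (mkOpen ts v) (mkOpen us w) σ) (hle : ts.length ≤ us.length) :
    σ v = (mkOpen (us.drop ts.length) w).subst σ := by
  induction ts generalizing us with
  | nil => exact h
  | cons t ts ih =>
    cases us with
    | nil => simp at hle
    | cons u us =>
      simp only [IsUnifier, mkOpen_cons, Tm.subst, Tm.cons.injEq] at h
      have := ih h.2 (Nat.le_of_succ_le_succ hle)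
      simpa only [List.length_cons, List.drop_succ_cons] using this

lemma zip_take {α β : Type*} (l : List α) (l' : List β) :
    l.zip l' = l.zip (l'.take l.length) := by
  induction l generalizing l' with
  | nil => simp
  | cons a l ih =>
    cases l' with
    | nil => simp
    | cons b l' =>
      rw [List.zip_cons_cons, List.length_cons, List.take_succ_cons, List.zip_cons_cons, ← ih]

lemma zip_pairwise {α β : Type*} {R : α → α → Prop} {S : β → β → Prop}
    {l : List α} {l' : List β} (h : l.Pairwise R) (h' : l'.Pairwise S) :
    (l.zip l').Pairwise (fun q q' => R q.1 q'.1 ∧ S q.2 q'.2) := by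
  induction l generalizing l' with
  | nil => simp
  | cons a l ih =>
    cases l' with
    | nil => simp
    | cons b l' =>
      rcases List.pairwise_cons.1 h with ⟨ha, h⟩
      rcases List.pairwise_cons.1 h' with ⟨hb, h'⟩
      refine List.pairwise_cons.2 ⟨?_, ih h h'⟩
      rintro ⟨x, y⟩ hxy
      rcases List.of_mem_zip hxy with ⟨hx, hy⟩
      exact ⟨ha x hx, hb y hy⟩

/-- Merge of a pair: if the first is a variable take the second, else the first. -/
def merge : Tm → Tm → Tm
  | .var _, u => u
  | t, _ => t

lemma merge_var (x : ℕ) (u : Tm) : merge (.var x) u = u := rfl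

lemma merge_ground {t : Tm} (h : t.Ground) (u : Tm) : merge t u = t := by
  cases t with
  | var x => exact absurd rfl (ground_not_var h x)
  | const c => rfl
  | nil => rfl
  | cons a b => rfl

/-- One step of the substitution built from a pair. -/
def pstep : Tm × Tm → ℕ → Option Tm
  | (.var y, u), x => if y = x then some u else none
  | (t, .var y), x => if y = x then some t else none
  | _, _ => none

/-- The substitution built from a list of pairs. -/
def sub1 : List (Tm × Tm) → ℕ → Tm
  | [], x => .var x
  | q :: p, x => (pstep q x).getD (sub1 p x)

lemma pstep_none {q : Tm × Tm} {x : ℕ} (h1 : x ∉ q.1.vars) (h2 : x ∉ q.2.vars) :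
    pstep q x = none := by
  obtain ⟨t, u⟩ := q
  cases t with
  | var y =>
    simp only [Tm.vars, Finset.mem_singleton] at h1
    simp [pstep, Ne.symm h1]
  | const c =>
    cases u with
    | var y =>
      simp only [Tm.vars, Finset.mem_singleton] at h2
      simp [pstep, Ne.symm h2]
    | const c' => rfl
    | nil => rfl
    | cons a b => rfl
  | nil =>
    cases u with
    | var y =>
      simp only [Tm.vars, Finset.mem_singleton] at h2
      simp [pstep, Ne.symm h2]
    | const c' => rfl
    | nil => rfl
    | cons a b => rfl
  | cons a b =>
    cases u with
    | var y =>
      simp only [Tm.vars, Finset.mem_singleton] at h2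
      simp [pstep, Ne.symm h2]
    | const c' => rfl
    | nil => rfl
    | cons a' b' => rfl

lemma sub1_fix {p : List (Tm × Tm)} {x : ℕ}
    (h : ∀ q ∈ p, x ∉ q.1.vars ∧ x ∉ q.2.vars) : sub1 p x = .var x := by
  induction p with
  | nil => rfl
  | cons q p ih =>
    have hq := h q (List.mem_cons_self)
    simp only [sub1, pstep_none hq.1 hq.2, Option.getD_none]
    exact ih fun q' hq' => h q' (List.mem_cons_of_mem _ hq')

lemma sub1_spec (p : List (Tm × Tm)) (x : ℕ) :
    sub1 p x = .var x ∨
      ∃ q ∈ p, (q.1 = .var x ∧ sub1 p x = q.2) ∨ (q.2 = .var x ∧ sub1 p x = q.1) := by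
  induction p with
  | nil => exact Or.inl rfl
  | cons q p ih =>
    obtain ⟨t, u⟩ := q
    have step : pstep (t, u) x = none ∨
        (t = .var x ∧ pstep (t, u) x = some u) ∨
        (u = .var x ∧ pstep (t, u) x = some t) := by
      cases t with
      | var y =>
        by_cases hyx : y = x
        · subst hyx; exact Or.inr (Or.inl ⟨rfl, by simp [pstep]⟩)
        · exact Or.inl (by simp [pstep, hyx])
      | const c =>
        cases u with
        | var z =>
          by_cases hzx : z = x
          · subst hzx; exact Or.inr (Or.inr ⟨rfl, by simp [pstep]⟩)
          · exact Or.inl (by simp [pstep, hzx])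
        | const c' => exact Or.inl rfl
        | nil => exact Or.inl rfl
        | cons a b => exact Or.inl rfl
      | nil =>
        cases u with
        | var z =>
          by_cases hzx : z = x
          · subst hzx; exact Or.inr (Or.inr ⟨rfl, by simp [pstep]⟩)
          · exact Or.inl (by simp [pstep, hzx])
        | const c' => exact Or.inl rfl
        | nil => exact Or.inl rfl
        | cons a b => exact Or.inl rfl
      | cons a b =>
        cases u with
        | var z =>
          by_cases hzx : z = x
          · subst hzx; exact Or.inr (Or.inr ⟨rfl, by simp [pstep]⟩)
          · exact Or.inl (by simp [pstep, hzx])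
        | const c' => exact Or.inl rfl
        | nil => exact Or.inl rfl
        | cons a' b' => exact Or.inl rfl
    rcases step with hs | ⟨ht, hs⟩ | ⟨hu, hs⟩
    · simp only [sub1, hs, Option.getD_none]
      rcases ih with h | ⟨q', hq', h⟩
      · exact Or.inl h
      · exact Or.inr ⟨q', List.mem_cons_of_mem _ hq', h⟩
    · exact Or.inr ⟨(t, u), List.mem_cons_self, Or.inl ⟨ht, by simp [sub1, hs]⟩⟩
    · exact Or.inr ⟨(t, u), List.mem_cons_self, Or.inr ⟨hu, by simp [sub1, hs]⟩⟩

lemma pstep_fst_var (x : ℕ) (u : Tm) : pstep (.var x, u) x = some u := by simp [pstep]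

lemma pstep_snd_var {t : Tm} (ht : t.Ground) (y : ℕ) : pstep (t, .var y) y = some t := by
  cases t with
  | var z => exact absurd rfl (ground_not_var ht z)
  | const c => simp [pstep]
  | nil => simp [pstep]
  | cons a b => simp [pstep]

lemma pair_subst {p : List (Tm × Tm)}
    (hA : ∀ q ∈ p, (q.1.Ground ∨ ∃ x, q.1 = .var x) ∧ (q.2.Ground ∨ ∃ x, q.2 = .var x)
            ∧ ¬(q.1.Ground ∧ q.2.Ground))
    (hB : (p.map (fun q => q.1.vars ∪ q.2.vars)).Pairwise Disjoint)
    (hC : ∀ q ∈ p, Disjoint q.1.vars q.2.vars) :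
    ∀ q ∈ p, q.1.subst (sub1 p) = merge q.1 q.2 ∧ q.2.subst (sub1 p) = merge q.1 q.2 := by
  induction p with
  | nil => simp
  | cons q0 p ih =>
    obtain ⟨t, u⟩ := q0
    rw [List.map_cons, List.pairwise_cons] at hB
    have hBh : ∀ q ∈ p, Disjoint (t.vars ∪ u.vars) (q.1.vars ∪ q.2.vars) := by
      intro q hq
      exact hB.1 _ (List.mem_map_of_mem hq)
    rintro q hq
    rcases List.mem_cons.1 hq with rfl | hq
    · -- the head pair
      have hAh := hA (t, u) (List.mem_cons_self)
      have hCh := hC (t, u) (List.mem_cons_self)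
      simp only at hAh hCh ⊢
      rcases hAh.1 with hg | ⟨x, hx⟩
      · -- t ground, so u is a variable
        have hu : ∃ y, u = .var y := by
          rcases hAh.2.1 with hg2 | h2
          · exact absurd ⟨hg, hg2⟩ hAh.2.2
          · exact h2
        obtain ⟨y, rfl⟩ := hu
        constructor
        · rw [ground_subst hg, merge_ground hg]
        · rw [merge_ground hg]
          show sub1 ((t, .var y) :: p) y = t
          simp [sub1, pstep_snd_var hg]
      · subst hx
        constructor
        · show sub1 ((.var x, u) :: p) x = merge (.var x) u
          simp [sub1, pstep_fst_var, merge_var]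
        · rw [merge_var]
          rcases hAh.2.1 with hg2 | ⟨y, hy⟩
          · exact ground_subst hg2 _
          · subst hy
            show sub1 ((Tm.var x, Tm.var y) :: p) y = .var y
            have hxy : x ≠ y := by
              intro h; subst h
              simpa [Tm.vars] using hCh
            have hstep : pstep (Tm.var x, Tm.var y) y = none := by
              simp [pstep, hxy]
            simp only [sub1, hstep, Option.getD_none]
            apply sub1_fix
            intro q' hq'
            have hd := hBh q' hq'
            have hyh : y ∈ (Tm.var x).vars ∪ (Tm.var y).vars := by
              simp [Tm.vars]
            constructor
            · intro hmem
              exact (Finset.disjoint_left.1 hd) hyh (Finset.mem_union_left _ hmem)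
            · intro hmem
              exact (Finset.disjoint_left.1 hd) hyh (Finset.mem_union_right _ hmem)
    · -- q in the tail
      have ihq := ih (fun q' hq' => hA q' (List.mem_cons_of_mem _ hq'))
        hB.2
        (fun q' hq' => hC q' (List.mem_cons_of_mem _ hq')) q hq
      have hagree : ∀ s : Tm, (∀ x ∈ s.vars, x ∈ q.1.vars ∪ q.2.vars) →
          s.subst (sub1 ((t, u) :: p)) = s.subst (sub1 p) := by
        intro s hs
        apply subst_congr
        intro x hx
        have hxq := hs x hx
        have hdis := hBh q hq
        have hxt : x ∉ t.vars := fun hc =>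
          (Finset.disjoint_left.1 hdis) (Finset.mem_union_left _ hc) hxq
        have hxu : x ∉ u.vars := fun hc =>
          (Finset.disjoint_left.1 hdis) (Finset.mem_union_right _ hc) hxq
        simp [sub1, pstep_none (q := (t, u)) hxt hxu]
      constructor
      · rw [hagree q.1 (fun x hx => Finset.mem_union_left _ hx)]; exact ihq.1
      · rw [hagree q.2 (fun x hx => Finset.mem_union_right _ hx)]; exact ihq.2

lemma vgd_pairwise {l : List Tm} (hsh : ∀ t ∈ l, t.Ground ∨ ∃ x, t = .var x)
    (hnd : l.Nodup) : (l.map Tm.vars).Pairwise Disjoint := by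
  rw [List.pairwise_map]
  refine hnd.imp_of_mem ?_
  intro a b ha hb hne
  rcases hsh a ha with hg | ⟨x, rfl⟩
  · rw [Tm.Ground] at hg; rw [hg]; exact Finset.disjoint_empty_left _
  · rcases hsh b hb with hg | ⟨y, rfl⟩
    · rw [Tm.Ground] at hg; rw [hg]; exact Finset.disjoint_empty_right _
    · have : x ≠ y := fun h => hne (by rw [h])
      simp only [Tm.vars, Finset.disjoint_singleton_left, Finset.disjoint_singleton_right,
        Finset.mem_singleton]
      exact fun h => this h.symm

lemma core (ts us : List Tm) (v w : ℕ)
    (h1 : IsGVD ts v) (h2 : IsGVD us w)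
    (hdisj : Disjoint (mkOpen ts v).vars (mkOpen us w).vars)
    (hnocommon : ∀ t, t ∈ ts → t ∈ us → ¬ t.Ground)
    (hunif : ∃ θ, IsUnifier (mkOpen ts v) (mkOpen us w) θ)
    (hle : ts.length ≤ us.length) :
    ∃ θ, IsMGU (mkOpen ts v) (mkOpen us w) θ ∧
      ∃ rs z, (mkOpen ts v).subst θ = mkOpen rs z ∧ IsGVD rs z := by
  obtain ⟨σ0, hσ0⟩ := hunif
  obtain ⟨h1s, h1n, h1p, h1v⟩ := h1
  obtain ⟨h2s, h2n, h2p, h2v⟩ := h2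
  set n := ts.length with hn
  set p := ts.zip us with hp
  -- membership and variable-side facts
  have memz : ∀ q ∈ p, q.1 ∈ ts ∧ q.2 ∈ us := fun q hq => List.of_mem_zip hq
  have memz2 : ∀ q ∈ p, q.2 ∈ us.take n := by
    intro q hq
    rw [hp, zip_take ts us] at hq
    exact (List.of_mem_zip hq).2
  have hLsub : ∀ t ∈ ts, t.vars ⊆ (mkOpen ts v).vars := by
    intro t ht x hx; exact mem_mkOpen_vars.2 (Or.inr ⟨t, ht, hx⟩)
  have hRsub : ∀ u ∈ us, u.vars ⊆ (mkOpen us w).vars := by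
    intro u hu x hx; exact mem_mkOpen_vars.2 (Or.inr ⟨u, hu, hx⟩)
  have hvL : v ∈ (mkOpen ts v).vars := mem_mkOpen_vars.2 (Or.inl rfl)
  have hwR : w ∈ (mkOpen us w).vars := mem_mkOpen_vars.2 (Or.inl rfl)
  have hvR : v ∉ (mkOpen us w).vars := fun hc => (Finset.disjoint_left.1 hdisj) hvL hc
  have hwL : w ∉ (mkOpen ts v).vars := fun hc => (Finset.disjoint_left.1 hdisj) hc hwR
  have hvw : v ≠ w := fun h => hvR (h ▸ hwR)
  -- the three invariants on the pair list
  have hA : ∀ q ∈ p, (q.1.Ground ∨ ∃ x, q.1 = .var x) ∧ (q.2.Ground ∨ ∃ x, q.2 = .var x)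
      ∧ ¬(q.1.Ground ∧ q.2.Ground) := by
    intro q hq
    obtain ⟨hq1, hq2⟩ := memz q hq
    refine ⟨h1s _ hq1, h2s _ hq2, ?_⟩
    rintro ⟨hg1, hg2⟩
    have := unif_zip hσ0 q hq
    rw [ground_subst hg1, ground_subst hg2] at this
    exact hnocommon q.1 hq1 (this ▸ hq2) hg1
  have hcross : ∀ q ∈ p, ∀ q' ∈ p, Disjoint q.1.vars q'.2.vars := by
    intro q hq q' hq'
    exact Finset.disjoint_of_subset_left (hLsub _ (memz q hq).1)
      (Finset.disjoint_of_subset_right (hRsub _ (memz q' hq').2) hdisj)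
  have hC : ∀ q ∈ p, Disjoint q.1.vars q.2.vars := fun q hq => hcross q hq q hq
  have hB : (p.map (fun q => q.1.vars ∪ q.2.vars)).Pairwise Disjoint := by
    rw [List.pairwise_map]
    have base := zip_pairwise (List.pairwise_map.1 h1p) (List.pairwise_map.1 h2p)
    rw [← hp] at base
    refine base.imp_of_mem ?_
    intro q q' hq hq' hr
    simp only [Finset.disjoint_union_left, Finset.disjoint_union_right]
    exact ⟨⟨hr.1, (hcross q' hq' q hq).symm⟩, hcross q hq q' hq', hr.2⟩
  -- the substitution
  set θ : ℕ → Tm := fun x => if x = v then mkOpen (us.drop n) w else sub1 p x with hθ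
  have θv : θ v = mkOpen (us.drop n) w := by rw [hθ]; simp
  have θne : ∀ x, x ≠ v → θ x = sub1 p x := by intro x hx; rw [hθ]; simp [hx]
  -- computation on the pairs
  have hpair : ∀ q ∈ p, q.1.subst θ = merge q.1 q.2 ∧ q.2.subst θ = merge q.1 q.2 := by
    intro q hq
    have key := pair_subst hA hB hC q hq
    have e1 : q.1.subst θ = q.1.subst (sub1 p) := by
      apply subst_congr; intro x hx
      exact θne x (fun h => h1v _ (memz q hq).1 (h ▸ hx))
    have e2 : q.2.subst θ = q.2.subst (sub1 p) := by
      apply subst_congr; intro x hx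
      exact θne x (fun h => hvR (hRsub _ (memz q hq).2 (h ▸ hx)))
    rw [e1, e2]; exact key
  -- θ fixes variables of the dropped part and w
  have htd : ∀ a ∈ us.take n, ∀ b ∈ us.drop n, Disjoint a.vars b.vars := by
    have := h2p
    rw [← List.take_append_drop n us, List.map_append, List.pairwise_append] at this
    intro a ha b hb
    exact this.2.2 _ (List.mem_map_of_mem ha) _ (List.mem_map_of_mem hb)
  have hdropfix : ∀ b ∈ us.drop n, b.subst θ = b := by
    intro b hb
    have hbus : b ∈ us := List.mem_of_mem_drop hb
    apply subst_id
    intro x hx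
    have hxR : x ∈ (mkOpen us w).vars := hRsub _ hbus hx
    have hxv : x ≠ v := fun h => hvR (h ▸ hxR)
    rw [θne x hxv]
    apply sub1_fix
    intro q hq
    constructor
    · intro hc
      exact (Finset.disjoint_left.1 hdisj) (hLsub _ (memz q hq).1 hc) hxR
    · intro hc
      exact (Finset.disjoint_left.1 (htd _ (memz2 q hq) _ hb)) hc hx
  have θw : θ w = .var w := by
    rw [θne w (Ne.symm hvw)]
    apply sub1_fix
    intro q hq
    exact ⟨fun hc => hwL (hLsub _ (memz q hq).1 hc), h2v _ (memz q hq).2⟩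
  -- the common instance
  set merged := p.map (fun q => merge q.1 q.2) with hm
  have mapts : ts.map (Tm.subst θ) = merged := by
    conv_lhs => rw [← List.map_fst_zip (l₁ := ts) (l₂ := us) hle]
    rw [← hp, List.map_map, hm]
    exact List.map_congr_left (fun q hq => (hpair q hq).1)
  have maptake : (us.take n).map (Tm.subst θ) = merged := by
    have hsnd : p.map Prod.snd = us.take n := by
      rw [hp, zip_take ts us]
      exact List.map_snd_zip (by simp [hn])
    conv_lhs => rw [← hsnd]
    rw [List.map_map, hm]
    exact List.map_congr_left (fun q hq => (hpair q hq).2)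
  have hinstL : (mkOpen ts v).subst θ = mkOpen (merged ++ us.drop n) w := by
    rw [mkOpen_subst, mapts, θv, foldr_mkOpen]
  have hinstR : (mkOpen us w).subst θ = mkOpen (merged ++ us.drop n) w := by
    rw [mkOpen_subst, θw]
    have : us.map (Tm.subst θ) = merged ++ us.drop n := by
      conv_lhs => rw [← List.take_append_drop n us]
      rw [List.map_append, maptake]
      congr 1
      calc (us.drop n).map (Tm.subst θ) = (us.drop n).map id :=
            List.map_congr_left (fun b hb => hdropfix b hb)
        _ = us.drop n := List.map_id _
    rw [this]; rfl
  have hunifθ : IsUnifier (mkOpen ts v) (mkOpen us w) θ := by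
    rw [IsUnifier, hinstL, hinstR]
  -- most general
  have hmgu : IsMGU (mkOpen ts v) (mkOpen us w) θ := by
    refine ⟨hunifθ, ?_⟩
    intro σ hσ
    refine ⟨σ, ?_⟩
    intro x
    by_cases hxv : x = v
    · subst hxv
      rw [θv]
      exact unif_tail hσ hle
    · rw [θne x hxv]
      rcases sub1_spec p x with h | ⟨q, hq, ⟨hq1, hs⟩ | ⟨hq2, hs⟩⟩
      · rw [h]; rfl
      · rw [hs]
        have := unif_zip hσ q hq
        rw [hq1] at this
        exact this
      · rw [hs]
        have := unif_zip hσ q hq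
        rw [hq2] at this
        exact this.symm
  -- classification of merged members
  have hmerge : ∀ q ∈ p, (merge q.1 q.2 = q.1 ∧ q.1.Ground) ∨
      (merge q.1 q.2 = q.2 ∧ ∃ x, q.1 = .var x) := by
    intro q hq
    rcases (hA q hq).1 with hg | ⟨x, hx⟩
    · exact Or.inl ⟨merge_ground hg _, hg⟩
    · exact Or.inr ⟨by rw [hx, merge_var], x, hx⟩
  have hgne : ∀ a, a ∈ ts → a.Ground → ∀ b ∈ us, a ≠ b := by
    intro a ha hg b hb heq
    exact hnocommon a ha (heq ▸ hb) hg
  -- shapes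
  have hshapes : ∀ r ∈ merged ++ us.drop n, r.Ground ∨ ∃ x, r = .var x := by
    intro r hr
    rcases List.mem_append.1 hr with hr | hr
    · obtain ⟨q, hq, rfl⟩ := List.mem_map.1 hr
      rcases (hA q hq).1 with hg | ⟨x, hx⟩
      · rw [merge_ground hg]; exact Or.inl hg
      · rw [hx, merge_var]; exact h2s _ (memz q hq).2
    · exact h2s _ (List.mem_of_mem_drop hr)
  -- nodup
  have hndm : merged.Nodup := by
    have base := zip_pairwise h1n h2n
    rw [← hp] at base
    rw [hm]
    refine List.pairwise_map.mpr (base.imp_of_mem ?_)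
    intro q q' hq hq' hne
    rcases hmerge q hq with ⟨e, hg⟩ | ⟨e, x, hx⟩ <;>
      rcases hmerge q' hq' with ⟨e', hg'⟩ | ⟨e', hx'⟩ <;> rw [e, e']
    · exact hne.1
    · exact hgne _ (memz q hq).1 hg _ (memz q' hq').2
    · exact (hgne _ (memz q' hq').1 hg' _ (memz q hq).2).symm
    · exact hne.2
  have hdropnd : (us.drop n).Nodup := List.Nodup.sublist (List.drop_sublist n us) h2n
  have hcrossne : ∀ a ∈ merged, ∀ b ∈ us.drop n, a ≠ b := by
    intro a ha b hb
    obtain ⟨q, hq, rfl⟩ := List.mem_map.1 ha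
    rcases hmerge q hq with ⟨e, hg⟩ | ⟨e, _⟩ <;> rw [e]
    · exact hgne _ (memz q hq).1 hg _ (List.mem_of_mem_drop hb)
    · have hndtd : (us.take n ++ us.drop n).Nodup := by
        rw [List.take_append_drop]; exact h2n
      exact fun h => List.disjoint_of_nodup_append hndtd (memz2 q hq) (by rw [h]; exact hb)
  have hnodup : (merged ++ us.drop n).Nodup := by
    rw [List.nodup_append]
    exact ⟨hndm, hdropnd, fun a ha b hb => hcrossne a ha b hb⟩
  refine ⟨θ, hmgu, merged ++ us.drop n, w, hinstL, hshapes, hnodup,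
    vgd_pairwise hshapes hnodup, ?_⟩
  -- w not in members
  intro r hr
  rcases List.mem_append.1 hr with hr | hr
  · obtain ⟨q, hq, rfl⟩ := List.mem_map.1 hr
    rcases (hA q hq).1 with hg | ⟨x, hx⟩
    · rw [merge_ground hg]
      rw [Tm.Ground] at hg
      rw [hg]; simp
    · rw [hx, merge_var]; exact h2v _ (memz q hq).2
  · exact h2v _ (List.mem_of_mem_drop hr)

theorem gvd_unify_gvd' (ts us : List Tm) (v w : ℕ)
    (h1 : IsGVD ts v) (h2 : IsGVD us w)
    (hdisj : Disjoint (mkOpen ts v).vars (mkOpen us w).vars)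
    (hnocommon : ∀ t, t ∈ ts → t ∈ us → ¬ t.Ground)
    (hunif : ∃ θ, IsUnifier (mkOpen ts v) (mkOpen us w) θ) :
    ∃ θ, IsMGU (mkOpen ts v) (mkOpen us w) θ ∧
      ∃ rs z, (mkOpen ts v).subst θ = mkOpen rs z ∧ IsGVD rs z := by
  by_cases hle : ts.length ≤ us.length
  · exact core ts us v w h1 h2 hdisj hnocommon hunif hle
  · obtain ⟨σ0, hσ0⟩ := hunif
    obtain ⟨θ, hmgu, rs, z, heq, hgvd⟩ :=
      core us ts w v h2 h1 hdisj.symm (fun t ha hb => hnocommon t hb ha)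
        ⟨σ0, hσ0.symm⟩ (le_of_not_ge hle)
    refine ⟨θ, ⟨hmgu.1.symm, fun σ hσ => hmgu.2 σ hσ.symm⟩, rs, z, ?_, hgvd⟩
    rw [← heq]
    exact hmgu.1.symm

/-- the unification of two unifiable, variable-disjoint g.v.d.'s
    with no common ground member is again a g.v.d.: there is an mgu whose
    common instance is a g.v.d. -/
theorem gvd_unify_gvd (ts us : List Tm) (v w : ℕ)
    (h1 : IsGVD ts v) (h2 : IsGVD us w)
    (hdisj : Disjoint (mkOpen ts v).vars (mkOpen us w).vars)
    (hnocommon : ∀ t, t ∈ ts → t ∈ us → ¬ t.Ground)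
    (hunif : ∃ θ, IsUnifier (mkOpen ts v) (mkOpen us w) θ) :
    ∃ θ, IsMGU (mkOpen ts v) (mkOpen us w) θ ∧
      ∃ rs z, (mkOpen ts v).subst θ = mkOpen rs z ∧ IsGVD rs z :=
  gvd_unify_gvd' ts us v w h1 h2 hdisj hnocommon hunif
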